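/- Let H be a Hilbert space, (H_i)_{i ∈ ℕ} a family of mutually orthogonal closed subspaces of H, and T ∈ B(H). Suppose there are c > 0 and, for every i, the restriction norm satisfies ‖P_{H_i} T P_{H_i}‖ ≥ c, where P_{H_i} is the orthogonal projection onto H_i. Then for every finite-rank operator x whose range and co-kernel are supported in finitely many of the H_i (i.e. there is a finite set F with ker(x)^⊥ ⊆ ⊕_{i∈F} H_i), one has ‖T + x‖ ≥ c. -/

import Mathlib

/-- Let `(V i)` be mutually orthogonal closed subspaces of a Hilbert space `H` and
`T ∈ B(H)` with `‖P_{V i} T P_{V i}‖ ≥ c` for all `i`. Then for every finite-rank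
operator `x` with `(ker x)ᗮ ⊆ ⊕_{i ∈ F} V i` for some finite `F`, one has `‖T + x‖ ≥ c`. -/
theorem norm_add_finite_rank_ge {H : Type*} [NormedAddCommGroup H]
    [InnerProductSpace ℂ H] [CompleteSpace H]
    (V : ℕ → Submodule ℂ H) [∀ i, CompleteSpace (V i)]
    (horth : ∀ i j, i ≠ j → ∀ u ∈ V i, ∀ v ∈ V j, (inner ℂ u v : ℂ) = 0)
    (T : H →L[ℂ] H) (c : ℝ) (hc : 0 < c)
    (hT : ∀ i, c ≤ ‖(V i).orthogonalProjectionOnto.comp (T.comp (V i).subtypeL)‖)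
    (x : H →L[ℂ] H) (hfr : FiniteDimensional ℂ (LinearMap.range (x : H →ₗ[ℂ] H)))
    (F : Finset ℕ) (hker : (LinearMap.ker (x : H →ₗ[ℂ] H))ᗮ ≤ ⨆ i ∈ F, V i) :
    c ≤ ‖T + x‖ := by
  obtain ⟨j, hj⟩ := Infinite.exists_notMem_finset F
  haveI : CompleteSpace (LinearMap.ker (x : H →ₗ[ℂ] H)) := x.isClosed_ker.completeSpace_coe
  -- V j is orthogonal to every V i with i ∈ F
  have hsup : (⨆ i ∈ F, V i) ≤ (V j)ᗮ := by
    refine iSup₂_le fun i hi => ?_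
    intro u hu
    rw [Submodule.mem_orthogonal]
    intro v hv
    exact horth j i (fun h => hj (h ▸ hi)) v hv u hu
  have hVker : V j ≤ LinearMap.ker (x : H →ₗ[ℂ] H) := by
    have h1 : (LinearMap.ker (x : H →ₗ[ℂ] H))ᗮ ≤ (V j)ᗮ := le_trans hker hsup
    have h2 : (V j)ᗮᗮ ≤ (LinearMap.ker (x : H →ₗ[ℂ] H))ᗮᗮ := Submodule.orthogonal_le h1
    rwa [Submodule.orthogonal_orthogonal, Submodule.orthogonal_orthogonal] at h2
  -- P (T + x) ι = P T ι
  have heq : (V j).orthogonalProjectionOnto.comp ((T + x).comp (V j).subtypeL)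
      = (V j).orthogonalProjectionOnto.comp (T.comp (V j).subtypeL) := by
    ext v
    have : x v = 0 := hVker v.2
    simp [this]
  calc c ≤ ‖(V j).orthogonalProjectionOnto.comp (T.comp (V j).subtypeL)‖ := hT j
    _ = ‖(V j).orthogonalProjectionOnto.comp ((T + x).comp (V j).subtypeL)‖ := by rw [heq]
    _ ≤ ‖(V j).orthogonalProjectionOnto‖ * (‖T + x‖ * ‖(V j).subtypeL‖) :=
        le_trans (ContinuousLinearMap.opNorm_comp_le _ _)
          (by gcongr; exact ContinuousLinearMap.opNorm_comp_le _ _)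
    _ ≤ 1 * (‖T + x‖ * 1) := by
        gcongr
        · exact Submodule.orthogonalProjectionOnto_norm_le _
        · exact Submodule.norm_subtypeL_le _
    _ = ‖T + x‖ := by ring
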